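/- arXiv:nlin/0003020 — 2 statements merged into one kernel-verified Lean document; each statement's English description precedes it below -/
import Mathlib

section
/- The 5x5 antisymmetric matrix P_0 with entries (P_0)_{14} = 2, (P_0)_{23} = -2, (P_0)_{25} = -20u_0, (P_0)_{34} = 20u_0, (P_0)_{35} = 20u_1, (P_0)_{45} = -140u_0^2 - 20u_2 (and entries determined by antisymmetry, all others zero) defines a Poisson tensor on R^5: it satisfies the Jacobi identity sum over cyclic permutations of (i,j,k) of sum_l (P_0)_{il} ∂(P_0)_{jk}/∂u_l = 0 for all indices i,j,k. -/
noncomputable section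

/-- Partial derivative of `H : ℝ⁵ → ℝ` at `u` in the `i`-th coordinate direction. -/
noncomputable def pd (H : (Fin 5 → ℝ) → ℝ) (u : Fin 5 → ℝ) (i : Fin 5) : ℝ :=
  fderiv ℝ H u (Pi.single i 1)

/-- The Hamiltonian `H₀` of the stationary KdV₅ system. -/
def H0 (u : Fin 5 → ℝ) : ℝ :=
  (1/16) * (-2*u 2*u 4 + 6*(u 0)^2*u 4 + (u 3)^2 - 12*u 0*u 1*u 3
    + 16*u 0*(u 2)^2 + 12*(u 1)^2*u 2 - 60*(u 0)^3*u 2 + 36*(u 0)^5)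

/-- The Hamiltonian `H₁` of the stationary KdV₅ system. -/
def H1 (u : Fin 5 → ℝ) : ℝ :=
  -(1/4) * (2*u 0*u 4 - 2*u 1*u 3 + (u 2)^2 - 20*(u 0)^2*u 2 + 15*(u 0)^4)

/-- The Hamiltonian `H₂` of the stationary KdV₅ system. -/
def H2 (u : Fin 5 → ℝ) : ℝ :=
  u 4 - 10*u 0*u 2 - 5*(u 1)^2 + 10*(u 0)^3

/-- The first vector field `X₁` of the stationary KdV₅ system. -/
def X1 (u : Fin 5 → ℝ) : Fin 5 → ℝ :=
  ![u 1, u 2, u 3, u 4, 10*u 0*u 3 + 20*u 1*u 2 - 30*(u 0)^2*u 1]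

/-- The third vector field `X₃` of the stationary KdV₅ system. -/
def X3 (u : Fin 5 → ℝ) : Fin 5 → ℝ :=
  ![(1/4)*(u 3 - 6*u 0*u 1),
    (1/4)*(u 4 - 6*u 0*u 2 - 6*(u 1)^2),
    (1/4)*(4*u 0*u 3 + 2*u 1*u 2 - 30*(u 0)^2*u 1),
    (1/4)*(4*u 0*u 4 + 6*u 1*u 3 + 2*(u 2)^2 - 30*(u 0)^2*u 2 - 60*u 0*(u 1)^2),
    (1/4)*(10*u 1*u 4 + 10*(u 0)^2*u 3 + 10*u 2*u 3 - 100*u 0*u 1*u 2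
      - 60*(u 1)^3 - 120*(u 0)^3*u 1)]

/-- The first Poisson tensor `P₀` of the stationary KdV₅ system. -/
def P0 (u : Fin 5 → ℝ) : Matrix (Fin 5) (Fin 5) ℝ :=
  !![0, 0, 0, 2, 0;
     0, 0, -2, 0, -20*u 0;
     0, 2, 0, 20*u 0, 20*u 1;
     -2, 0, -20*u 0, 0, -140*(u 0)^2 - 20*u 2;
     0, 20*u 0, -20*u 1, 140*(u 0)^2 + 20*u 2, 0]

/-- The second Poisson tensor `P₁` of the stationary KdV₅ system. -/
def P1 (u : Fin 5 → ℝ) : Matrix (Fin 5) (Fin 5) ℝ :=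
  !![0, 1/2, 0, 3*u 0, 6*u 1;
     -(1/2), 0, -3*u 0, -3*u 1, -4*u 2 - 15*(u 0)^2;
     0, 3*u 0, 0, u 2 + 15*(u 0)^2, u 3 + 30*u 0*u 1;
     -3*u 0, 3*u 1, -(u 2 + 15*(u 0)^2), 0, u 4 - 40*u 0*u 2 + 30*(u 1)^2 - 60*(u 0)^3;
     -6*u 1, 4*u 2 + 15*(u 0)^2, -(u 3 + 30*u 0*u 1),
       -(u 4 - 40*u 0*u 2 + 30*(u 1)^2 - 60*(u 0)^3), 0]

/-- One term of the cyclic Jacobi expression: `∑ₗ P_{il} ∂Q_{jk}/∂u_l`. -/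
noncomputable def jacTerm (P Q : (Fin 5 → ℝ) → Matrix (Fin 5) (Fin 5) ℝ)
    (u : Fin 5 → ℝ) (i j k : Fin 5) : ℝ :=
  ∑ l, P u i l * pd (fun v => Q v j k) u l

lemma pd_const' (c : ℝ) (u : Fin 5 → ℝ) (i : Fin 5) : pd (fun _ => c) u i = 0 := by
  simp [pd]

lemma hproj' (m : Fin 5) (u : Fin 5 → ℝ) :
    HasFDerivAt (fun v : Fin 5 → ℝ => v m)
      (ContinuousLinearMap.proj (R := ℝ) (φ := fun _ : Fin 5 => ℝ) m) u :=
  (ContinuousLinearMap.proj (R := ℝ) (φ := fun _ : Fin 5 => ℝ) m).hasFDerivAt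

lemma pd_c0' (c : ℝ) (u : Fin 5 → ℝ) (i : Fin 5) :
    pd (fun v => c * v 0) u i = c * (if i = 0 then 1 else 0) := by
  have h := (hproj' 0 u).const_mul c
  unfold pd
  rw [h.fderiv]
  simp [Pi.single_apply, eq_comm]

lemma pd_c1' (c : ℝ) (u : Fin 5 → ℝ) (i : Fin 5) :
    pd (fun v => c * v 1) u i = c * (if i = 1 then 1 else 0) := by
  have h := (hproj' 1 u).const_mul c
  unfold pd
  rw [h.fderiv]
  simp [Pi.single_apply, eq_comm]

lemma pd_n0' (c : ℝ) (u : Fin 5 → ℝ) (i : Fin 5) :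
    pd (fun v => -(c * v 0)) u i = -c * (if i = 0 then 1 else 0) := by
  have h : HasFDerivAt (fun v : Fin 5 → ℝ => -(c * v 0)) _ u := ((hproj' 0 u).const_mul c).neg
  unfold pd
  rw [h.fderiv]
  simp [Pi.single_apply, eq_comm]
  split <;> simp

lemma pd_n1' (c : ℝ) (u : Fin 5 → ℝ) (i : Fin 5) :
    pd (fun v => -(c * v 1)) u i = -c * (if i = 1 then 1 else 0) := by
  have h : HasFDerivAt (fun v : Fin 5 → ℝ => -(c * v 1)) _ u := ((hproj' 1 u).const_mul c).neg
  unfold pd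
  rw [h.fderiv]
  simp [Pi.single_apply, eq_comm]
  split <;> simp

lemma hsq' (u : Fin 5 → ℝ) :
    HasFDerivAt (fun v : Fin 5 → ℝ => (v 0)^2)
      (u 0 • ContinuousLinearMap.proj (R := ℝ) (φ := fun _ : Fin 5 => ℝ) 0
        + u 0 • ContinuousLinearMap.proj 0) u := by
  have h : HasFDerivAt (fun v : Fin 5 → ℝ => v 0 * v 0) _ u := (hproj' 0 u).mul (hproj' 0 u)
  simpa [pow_two] using h

lemma pdA' (u : Fin 5 → ℝ) (i : Fin 5) :
    pd (fun v => -(140*(v 0)^2) - 20*v 2) u i =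
      -280 * u 0 * (if i = 0 then 1 else 0) - 20 * (if i = 2 then 1 else 0) := by
  have h : HasFDerivAt (fun v : Fin 5 → ℝ => -(140*(v 0)^2) - 20*v 2) _ u := (((hsq' u).const_mul 140).neg).sub ((hproj' 2 u).const_mul 20)
  unfold pd
  rw [h.fderiv]
  simp [Pi.single_apply]
  fin_cases i <;> norm_num [Fin.ext_iff] <;> ring

lemma pdB' (u : Fin 5 → ℝ) (i : Fin 5) :
    pd (fun v => 140*(v 0)^2 + 20*v 2) u i =
      280 * u 0 * (if i = 0 then 1 else 0) + 20 * (if i = 2 then 1 else 0) := by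
  have h : HasFDerivAt (fun v : Fin 5 → ℝ => 140*(v 0)^2 + 20*v 2) _ u := ((hsq' u).const_mul 140).add ((hproj' 2 u).const_mul 20)
  unfold pd
  rw [h.fderiv]
  simp [Pi.single_apply]
  fin_cases i <;> norm_num [Fin.ext_iff] <;> ring

/-- Explicit partial derivatives of the entries of `P₀`. -/
def dP0 (u : Fin 5 → ℝ) : Fin 5 → Matrix (Fin 5) (Fin 5) ℝ :=
  ![!![0,0,0,0,0; 0,0,0,0,-20; 0,0,0,20,0; 0,0,-20,0,-280*u 0; 0,20,0,280*u 0,0],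
    !![0,0,0,0,0; 0,0,0,0,0; 0,0,0,0,20; 0,0,0,0,0; 0,0,-20,0,0],
    !![0,0,0,0,0; 0,0,0,0,0; 0,0,0,0,0; 0,0,0,0,-20; 0,0,0,20,0],
    !![0,0,0,0,0; 0,0,0,0,0; 0,0,0,0,0; 0,0,0,0,0; 0,0,0,0,0],
    !![0,0,0,0,0; 0,0,0,0,0; 0,0,0,0,0; 0,0,0,0,0; 0,0,0,0,0]]

set_option maxHeartbeats 2000000 in
lemma pdP0 (u : Fin 5 → ℝ) (l j k : Fin 5) :
    pd (fun v => P0 v j k) u l = dP0 u l j k := by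
  fin_cases j <;> fin_cases k <;>
    fin_cases l <;>
      simp [P0, dP0, pd_const', pd_c0', pd_c1', pd_n0', pd_n1', pdA', pdB', Matrix.vecHead, Matrix.vecTail]


set_option maxHeartbeats 4000000 in
/-- `P₀` satisfies the cyclic Jacobi identity, hence is a Poisson tensor on ℝ⁵. -/
theorem stmt3 :
    ∀ u : Fin 5 → ℝ, ∀ i j k : Fin 5,
      jacTerm P0 P0 u i j k + jacTerm P0 P0 u j k i + jacTerm P0 P0 u k i j = 0 := by
  intro u i j k
  have e : ∀ i j k : Fin 5, jacTerm P0 P0 u i j k = ∑ l, P0 u i l * dP0 u l j k := by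
    intro i j k
    unfold jacTerm
    exact Finset.sum_congr rfl fun l _ => by rw [pdP0]
  rw [e, e, e]
  fin_cases i <;> fin_cases j <;> fin_cases k <;>
    (simp [Fin.sum_univ_five, P0, dP0, Matrix.vecHead, Matrix.vecTail]; try ring)


end
end

section
/- The vector field X_1 of the stationary KdV_5 system is bi-Hamiltonian: X_1 = P_0 · dH_1 = P_1 · dH_2, where both equalities hold identically as polynomial identities on R^5. -/
noncomputable section

lemma hp (u : Fin 5 → ℝ) (i : Fin 5) :
    HasFDerivAt (fun v : Fin 5 → ℝ => v i)
      (ContinuousLinearMap.proj i : (Fin 5 → ℝ) →L[ℝ] ℝ) u :=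
  hasFDerivAt_apply i u

set_option maxHeartbeats 2000000 in
lemma pdH1 (u : Fin 5 → ℝ) (j : Fin 5) :
    pd H1 u j = ![-(1/4)*(2*u 4 - 40*u 0*u 2 + 60*(u 0)^3), u 3 / 2,
      -(1/4)*(2*u 2 - 20*(u 0)^2), u 1 / 2, -(u 0) / 2] j := by
  have hf : H1 = fun y : Fin 5 → ℝ =>
      -(1/4) * (2 * y 0 * y 4 - 2 * y 1 * y 3 + y 2 * y 2 - 20 * y 0 * y 0 * y 2
        + 15 * y 0 * y 0 * y 0 * y 0) := by
    funext v; simp only [H1]; ring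
  have h : HasFDerivAt
      (fun y : Fin 5 → ℝ =>
        -(1/4) * (2 * y 0 * y 4 - 2 * y 1 * y 3 + y 2 * y 2 - 20 * y 0 * y 0 * y 2
          + 15 * y 0 * y 0 * y 0 * y 0))
      ((-(1 / 4) : ℝ) •
        ((2 * u 0) • ContinuousLinearMap.proj 4 + u 4 • (2:ℝ) • ContinuousLinearMap.proj 0 -
                ((2 * u 1) • ContinuousLinearMap.proj 3 + u 3 • (2:ℝ) • ContinuousLinearMap.proj 1) +
              (u 2 • ContinuousLinearMap.proj 2 + u 2 • ContinuousLinearMap.proj 2) -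
            ((20 * u 0 * u 0) • ContinuousLinearMap.proj 2 +
              u 2 • ((20 * u 0) • ContinuousLinearMap.proj 0 + u 0 • (20:ℝ) • ContinuousLinearMap.proj 0)) +
          ((15 * u 0 * u 0 * u 0) • ContinuousLinearMap.proj 0 +
            u 0 •
              ((15 * u 0 * u 0) • ContinuousLinearMap.proj 0 +
                u 0 • ((15 * u 0) • ContinuousLinearMap.proj 0 + u 0 • (15:ℝ) • (ContinuousLinearMap.proj 0 : (Fin 5 → ℝ) →L[ℝ] ℝ)))))) u :=
    ((((((hp u 0).const_mul (2:ℝ)).mul (hp u 4)).sub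
      (((hp u 1).const_mul (2:ℝ)).mul (hp u 3))).add ((hp u 2).mul (hp u 2))).sub
      ((((hp u 0).const_mul (20:ℝ)).mul (hp u 0)).mul (hp u 2))).add
      ((((((hp u 0).const_mul (15:ℝ)).mul (hp u 0)).mul (hp u 0)).mul (hp u 0))) |>.const_mul (-(1/4):ℝ)
  rw [pd, hf, h.fderiv]
  fin_cases j <;>
    simp [ContinuousLinearMap.proj_apply, Pi.single_apply] <;> ring

set_option maxHeartbeats 2000000 in
lemma pdH2 (u : Fin 5 → ℝ) (j : Fin 5) :
    pd H2 u j = ![-10*u 2 + 30*(u 0)^2, -10*u 1, -10*u 0, 0, 1] j := by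
  have hf : H2 = fun x : Fin 5 → ℝ =>
      x 4 - 10 * x 0 * x 2 - 5 * x 1 * x 1 + 10 * x 0 * x 0 * x 0 := by
    funext v; simp only [H2]; ring
  have h : HasFDerivAt
      (fun x : Fin 5 → ℝ => x 4 - 10 * x 0 * x 2 - 5 * x 1 * x 1 + 10 * x 0 * x 0 * x 0)
      (ContinuousLinearMap.proj 4 -
          ((10 * u 0) • ContinuousLinearMap.proj 2 + u 2 • (10:ℝ) • ContinuousLinearMap.proj 0) -
          ((5 * u 1) • ContinuousLinearMap.proj 1 + u 1 • (5:ℝ) • ContinuousLinearMap.proj 1) +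
        ((10 * u 0 * u 0) • ContinuousLinearMap.proj 0 +
          u 0 • ((10 * u 0) • ContinuousLinearMap.proj 0 + u 0 • (10:ℝ) • (ContinuousLinearMap.proj 0 : (Fin 5 → ℝ) →L[ℝ] ℝ)))) u :=
    (((hp u 4).sub (((hp u 0).const_mul (10:ℝ)).mul (hp u 2))).sub
      (((hp u 1).const_mul (5:ℝ)).mul (hp u 1))).add
      ((((hp u 0).const_mul (10:ℝ)).mul (hp u 0)).mul (hp u 0))
  rw [pd, hf, h.fderiv]
  fin_cases j <;>
    simp [ContinuousLinearMap.proj_apply, Pi.single_apply] <;> ring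

/-- `X₁` is bi-Hamiltonian: `X₁ = P₀ · dH₁ = P₁ · dH₂`. -/
theorem stmt8 :
    ∀ u : Fin 5 → ℝ, ∀ i : Fin 5,
      X1 u i = ∑ j, P0 u i j * pd H1 u j ∧
      X1 u i = ∑ j, P1 u i j * pd H2 u j := by
  intro u i
  constructor <;>
  · simp only [Fin.sum_univ_five, pdH1, pdH2]
    fin_cases i <;>
      simp [X1, P0, P1, Matrix.cons_val', Matrix.cons_val_zero, Matrix.cons_val_one] <;> ring
end
end
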